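/- Under the dynamics x(t+1) = A x(t) + B u(t) + w(t), y(t) = x(t) + v(t), with w(t) ∈ Z_w, v(t) ∈ Z_v, A v(t) ∈ Z_{Av}, the true output trajectory satisfies y(t) ∈ R̂_t for all t, where R̂_t is the data-driven reachable set defined by R̂_0 = {y(0)} and R̂_{t+1} = M_Σ·(R̂_t × {u(t)}) ⊕ Z_w ⊕ Z_v ⊕ (−Z_{Av}), provided [A B] ∈ M_Σ. -/

import Mathlib

open Matrix BigOperators Pointwise

def zono {V : Type*} [AddCommGroup V] [Module ℝ V] {ι : Type*} [Fintype ι]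
    (c : V) (g : ι → V) : Set V :=
  {x | ∃ β : ι → ℝ, (∀ i, |β i| ≤ 1) ∧ x = c + ∑ i, β i • g i}

def matSetProd {n m : ℕ} (M : Set (Matrix (Fin n) (Fin n ⊕ Fin m) ℝ))
    (S : Set (Fin n → ℝ)) (U : Set (Fin m → ℝ)) : Set (Fin n → ℝ) :=
  {y | ∃ X ∈ M, ∃ s ∈ S, ∃ u ∈ U, y = X.mulVec (Sum.elim s u)}

/-- The true output trajectory is contained in the data-driven reachable sets:
`y(t) ∈ R̂_t` for all `t`. -/
theorem output_in_data_reach {n m γw γv γa : ℕ}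
    (A : Matrix (Fin n) (Fin n) ℝ) (B : Matrix (Fin n) (Fin m) ℝ)
    (Msig : Set (Matrix (Fin n) (Fin n ⊕ Fin m) ℝ))
    (hAB : Matrix.fromCols A B ∈ Msig)
    (x y : ℕ → Fin n → ℝ) (u : ℕ → Fin m → ℝ) (w v : ℕ → Fin n → ℝ)
    (cw : Fin n → ℝ) (gw : Fin γw → Fin n → ℝ)
    (cv : Fin n → ℝ) (gv : Fin γv → Fin n → ℝ)
    (ca : Fin n → ℝ) (ga : Fin γa → Fin n → ℝ)
    (hdyn : ∀ t, x (t + 1) = A.mulVec (x t) + B.mulVec (u t) + w t)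
    (hout : ∀ t, y t = x t + v t)
    (hw : ∀ t, w t ∈ zono cw gw)
    (hv : ∀ t, v t ∈ zono cv gv)
    (hav : ∀ t, A.mulVec (v t) ∈ zono ca ga)
    (Rhat : ℕ → Set (Fin n → ℝ))
    (hRhat0 : Rhat 0 = {y 0})
    (hRhat : ∀ t, Rhat (t + 1) =
      matSetProd Msig (Rhat t) {u t} + zono cw gw + zono cv gv + -(zono ca ga)) :
    ∀ t, y t ∈ Rhat t := by
  intro t
  induction t with
  | zero => rw [hRhat0]; rfl
  | succ t ih =>
      rw [hRhat t]
      have hdecomp : y (t + 1) =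
          (Matrix.fromCols A B).mulVec (Sum.elim (y t) (u t)) + w t + v (t + 1)
            + -(A.mulVec (v t)) := by
        rw [Matrix.fromCols_mulVec_sumElim, hout (t + 1), hdyn t, hout t,
          Matrix.mulVec_add]
        abel
      rw [hdecomp]
      refine Set.add_mem_add (Set.add_mem_add (Set.add_mem_add ?_ (hw t)) (hv (t + 1)))
        (Set.neg_mem_neg.mpr (hav t))
      exact ⟨_, hAB, _, ih, _, rfl, rfl⟩
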